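/- Let W : ℝ → ℝ be positive and differentiable with W' = 2W²·(G/W - ε/2), where ε > 0 and G/W → 0 as η → ∞. Then lim_{η→∞} η·W(η) = 1/ε. -/

import Mathlib

open Filter

/-- If `deriv f → ε` at `atTop`, then `f x / x → ε`. -/
lemma aux_slope (f : ℝ → ℝ) (hf : Differentiable ℝ f) (ε : ℝ)
    (h : Tendsto (deriv f) atTop (nhds ε)) :
    Tendsto (fun x => f x / x) atTop (nhds ε) := by
  rw [Metric.tendsto_nhds] at h ⊢
  intro δ hδ
  obtain ⟨a, ha⟩ := (Filter.eventually_atTop).1 (h (δ / 2) (by positivity))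
  set g : ℝ → ℝ := fun x => f x - ε * x with hg_def
  have hg : ∀ x, HasDerivAt g (deriv f x - ε) x := by
    intro x
    exact (((hf x).hasDerivAt).sub ((hasDerivAt_id x).const_mul ε)).congr_deriv (by ring)
  set a0 : ℝ := max a 0 with ha0_def
  have key : ∀ x, a0 ≤ x → |g x - g a0| ≤ δ / 2 * (x - a0) := by
    intro x hx
    have hb : ∀ y ∈ Set.Icc a0 x, ‖deriv f y - ε‖ ≤ δ / 2 := by
      intro y hy
      have hya : a ≤ y := le_trans (le_max_left a 0) hy.1
      have := ha y hya
      rw [Real.dist_eq] at this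
      simpa [Real.norm_eq_abs] using this.le
    have := Convex.norm_image_sub_le_of_norm_hasDerivWithin_le
      (fun y _ => (hg y).hasDerivWithinAt) hb (convex_Icc a0 x)
      (Set.left_mem_Icc.2 hx) (Set.right_mem_Icc.2 hx)
    simpa [Real.norm_eq_abs, abs_of_nonneg (sub_nonneg.2 hx)] using this
  filter_upwards [eventually_ge_atTop a0, eventually_ge_atTop (1 : ℝ),
    eventually_gt_atTop (2 * |g a0| / δ)] with x hx1 hx2 hx3
  have hx0 : (0 : ℝ) < x := lt_of_lt_of_le one_pos hx2
  have hgx : |g x| ≤ |g a0| + δ / 2 * x := by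
    have h1 : |g x| ≤ |g a0| + |g x - g a0| := by
      have := abs_add_le (g a0) (g x - g a0); simpa using this
    have h2 : δ / 2 * (x - a0) ≤ δ / 2 * x := by
      have : x - a0 ≤ x := by simp [ha0_def]
      nlinarith
    linarith [key x hx1]
  have heq : f x / x - ε = g x / x := by
    field_simp [hg_def]
    ring
  rw [Real.dist_eq, heq, abs_div, abs_of_pos hx0]
  have h4 : |g a0| / x < δ / 2 := by
    rw [div_lt_iff₀ hx0]
    have : 2 * |g a0| / δ < x := hx3
    rw [div_lt_iff₀ hδ] at this
    linarith
  have : |g x| / x ≤ |g a0| / x + δ / 2 := by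
    rw [div_add' _ _ _ hx0.ne', div_le_div_iff₀ hx0 hx0]
    nlinarith
  linarith

/-- Asymptotics of `W` along expanding soliton trajectories: `η·W → 1/ε`. -/
theorem stmt_13 (ε : ℝ) (hε : 0 < ε) (W G : ℝ → ℝ)
    (hWpos : ∀ η, 0 < W η) (hWd : Differentiable ℝ W)
    (hW' : ∀ η, deriv W η = 2 * W η ^ 2 * (G η / W η - ε / 2))
    (hGW : Filter.Tendsto (fun η => G η / W η) Filter.atTop (nhds 0)) :
    Filter.Tendsto (fun η => η * W η) Filter.atTop (nhds (1 / ε)) := by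
  set V : ℝ → ℝ := fun η => (W η)⁻¹ with hV_def
  have hWne : ∀ η, W η ≠ 0 := fun η => (hWpos η).ne'
  have hVd : Differentiable ℝ V := hWd.inv hWne
  have hV' : ∀ η, deriv V η = ε - 2 * (G η / W η) := by
    intro η
    have h1 : HasDerivAt V (-(deriv W η) / (W η) ^ 2) η :=
      ((hWd η).hasDerivAt).inv (hWne η)
    rw [h1.deriv, hW' η]
    field_simp [hWne η]
    ring
  have hVtend : Tendsto (deriv V) atTop (nhds ε) := by
    have : Tendsto (fun η => ε - 2 * (G η / W η)) atTop (nhds (ε - 2 * 0)) :=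
      tendsto_const_nhds.sub (hGW.const_mul 2)
    simpa [funext hV'] using this
  have hslope : Tendsto (fun x => V x / x) atTop (nhds ε) := aux_slope V hVd ε hVtend
  have hinv : Tendsto (fun x => (V x / x)⁻¹) atTop (nhds ε⁻¹) := hslope.inv₀ hε.ne'
  have heq : (fun x => (V x / x)⁻¹) = fun η => η * W η := by
    funext x
    rw [inv_div, hV_def]
    simp [div_eq_mul_inv, inv_inv]
  rw [heq] at hinv
  simpa [one_div] using hinv
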